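/- For every integer N ≥ 1 and every f ∈ NN(N), there exist an integer K with 0 ≤ K ≤ N, coefficients c_1,…,c_K ∈ ℝ, a vector w ∈ ℝ^{d+1}, and directions v_1,…,v_K ∈ S_0 satisfying v_i ≠ v_k and v_i ≠ -v_k for all 1 ≤ i ≠ k ≤ K, such that f(x) = Σ_{k=1}^K c_k σ((xᵀ,1)v_k) + (xᵀ,1)w for all x ∈ B^d. -/

import Mathlib

open MeasureTheory Real

noncomputable section

/-- Euclidean space ℝ^d. -/
abbrev E (d : ℕ) := EuclideanSpace ℝ (Fin d)

/-- The ReLU function σ(t) = max{t, 0}. -/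
def relu (t : ℝ) : ℝ := max t 0

/-- The quantity (xᵀ,1)v : the inner product of (x,1) ∈ ℝ^{d+1} with v ∈ ℝ^{d+1}. -/
def aff {d : ℕ} (x : E d) (v : E (d + 1)) : ℝ :=
  (∑ i : Fin d, x i * v i.castSucc) + v (Fin.last d)

/-- Parameters θ = (a_1, w_1, …, a_N, w_N) of a shallow ReLU network of width N. -/
abbrev Params (d N : ℕ) := (Fin N → ℝ) × (Fin N → E (d + 1))

/-- The network function f_θ(x) = Σ_i a_i σ((xᵀ,1) w_i). -/
def networkFn {d N : ℕ} (θ : Params d N) (x : E d) : ℝ :=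
  ∑ i, θ.1 i * relu (aff x (θ.2 i))

/-- The path norm κ(θ) = Σ_i |a_i| ‖w_i‖₂. -/
def pathNorm {d N : ℕ} (θ : Params d N) : ℝ :=
  ∑ i, |θ.1 i| * ‖θ.2 i‖

/-- The squared Euclidean norm ‖θ‖₂² of the parameter vector. -/
def paramNormSq {d N : ℕ} (θ : Params d N) : ℝ :=
  (∑ i, (θ.1 i) ^ 2) + ∑ i, ‖θ.2 i‖ ^ 2

/-- NN(N): functions on the unit ball B^d realized by a width-N shallow ReLU network. -/
def NNclass (d N : ℕ) : Set (E d → ℝ) :=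
  {f | ∃ θ : Params d N, ∀ x : E d, ‖x‖ ≤ 1 → f x = networkFn θ x}

/-- NN(N, M): functions realized by a width-N network with path norm κ(θ) ≤ M. -/
def NNclassM (d N : ℕ) (M : ℝ) : Set (E d → ℝ) :=
  {f | ∃ θ : Params d N, pathNorm θ ≤ M ∧ ∀ x : E d, ‖x‖ ≤ 1 → f x = networkFn θ x}

/-- κ(f) = inf{ Σ_j |c_j| : f(x) = Σ_j c_j σ((xᵀ,1)v_j) on B^d, v_j ∈ S^d }. -/
def kappaF {d : ℕ} (f : E d → ℝ) : ℝ :=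
  sInf {s | ∃ (m : ℕ) (c : Fin m → ℝ) (v : Fin m → E (d + 1)),
    (∀ j, ‖v j‖ = 1) ∧ (∀ x : E d, ‖x‖ ≤ 1 → f x = ∑ j, c j * relu (aff x (v j))) ∧
    s = ∑ j, |c j|}

/-- S_- = {v ∈ S^d : v_{d+1} ≤ -√2/2}. -/
def Sminus (d : ℕ) : Set (E (d + 1)) :=
  {v | ‖v‖ = 1 ∧ v (Fin.last d) ≤ -(Real.sqrt 2 / 2)}

/-- S_+ = -S_-. -/
def Splus (d : ℕ) : Set (E (d + 1)) := {v | -v ∈ Sminus d}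

/-- S_0 = S^d \ (S_- ∪ S_+). -/
def Szero (d : ℕ) : Set (E (d + 1)) := {v | ‖v‖ = 1} \ (Sminus d ∪ Splus d)

/-- The variation class F_σ(M): functions f(x) = ∫_{S^d} σ((xᵀ,1)v) dμ(v) for a signed Radon
measure μ on S^d with ‖μ‖ ≤ M (represented by its Jordan decomposition μ = μp - μn). -/
def Fsigma (d : ℕ) (M : ℝ) : Set (E d → ℝ) :=
  {f | ∃ μp μn : Measure (E (d + 1)), IsFiniteMeasure μp ∧ IsFiniteMeasure μn ∧
    μp {v | ‖v‖ = 1}ᶜ = 0 ∧ μn {v | ‖v‖ = 1}ᶜ = 0 ∧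
    (μp Set.univ).toReal + (μn Set.univ).toReal ≤ M ∧
    ∀ x : E d, ‖x‖ ≤ 1 →
      f x = (∫ v, relu (aff x v) ∂μp) - ∫ v, relu (aff x v) ∂μn}

/-- Empirical L²(μ_n) norm: ‖f‖_{L²(μ_n)} = ((1/n) Σ_i f(X_i)²)^{1/2}. -/
def empNorm {d n : ℕ} (X : Fin n → E d) (f : E d → ℝ) : ℝ :=
  Real.sqrt ((∑ i, (f (X i)) ^ 2) / n)

/-- Local complexity G_n(F; δ, ξ) = E[ sup { |(1/n) Σ_i ξ_i f(X_i)| : f ∈ F, ‖f‖_{L²(μ_n)} ≤ δ} ]. -/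
def localComplexity {d n : ℕ} {Ω : Type*} [MeasurableSpace Ω] (P : Measure Ω)
    (F : Set (E d → ℝ)) (X : Fin n → E d) (δ : ℝ) (ξ : Fin n → Ω → ℝ) : ℝ :=
  ∫ ω, sSup {r | ∃ f ∈ F, empNorm X f ≤ δ ∧ r = |(∑ i, ξ i ω * f (X i)) / n|} ∂P

/-- star(F) = {a f : f ∈ F, a ∈ [0,1]}. -/
def starHull {d : ℕ} (F : Set (E d → ℝ)) : Set (E d → ℝ) :=
  {g | ∃ f ∈ F, ∃ a : ℝ, 0 ≤ a ∧ a ≤ 1 ∧ g = fun x => a * f x}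

/-- ∂F = {f₁ - f₂ : f₁, f₂ ∈ F}. -/
def diffClass {d : ℕ} (F : Set (E d → ℝ)) : Set (E d → ℝ) :=
  {g | ∃ f₁ ∈ F, ∃ f₂ ∈ F, g = f₁ - f₂}

/-- Truncation operator T_b. -/
def truncate {d : ℕ} (b : ℝ) (f : E d → ℝ) : E d → ℝ := fun x => max (-b) (min b (f x))

/-- The Hölder ball H^α on B^d. -/
def HolderBall (d : ℕ) (α : ℝ) : Set (E d → ℝ) :=
  {h | ∃ (r : ℕ) (β : ℝ) (g : E d → ℝ), α = r + β ∧ 0 < β ∧ β ≤ 1 ∧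
    (∀ x : E d, ‖x‖ ≤ 1 → g x = h x) ∧ ContDiff ℝ r g ∧
    (∀ k : ℕ, k ≤ r → ∀ x, ‖iteratedFDeriv ℝ k g x‖ ≤ 1) ∧
    (∀ x y : E d, ‖iteratedFDeriv ℝ r g x - iteratedFDeriv ℝ r g y‖ ≤ ‖x - y‖ ^ β)}

lemma aff_zero {d : ℕ} (x : E d) : aff x 0 = 0 := by simp [aff]

lemma aff_smul {d : ℕ} (x : E d) (a : ℝ) (v : E (d+1)) : aff x (a • v) = a * aff x v := by
  simp only [aff, PiLp.smul_apply, smul_eq_mul, mul_add, Finset.mul_sum]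
  congr 1
  exact Finset.sum_congr rfl fun i _ => by ring

lemma aff_add {d : ℕ} (x : E d) (v w : E (d+1)) : aff x (v + w) = aff x v + aff x w := by
  simp only [aff, PiLp.add_apply, mul_add, Finset.sum_add_distrib]
  ring

lemma aff_neg {d : ℕ} (x : E d) (v : E (d+1)) : aff x (-v) = - aff x v := by
  have := aff_smul x (-1) v
  simpa using this

lemma relu_of_nonpos {t : ℝ} (h : t ≤ 0) : relu t = 0 := max_eq_right h
lemma relu_of_nonneg {t : ℝ} (h : 0 ≤ t) : relu t = t := max_eq_left h
lemma relu_mul_nonneg {a t : ℝ} (h : 0 ≤ a) : relu (a * t) = a * relu t := by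
  unfold relu
  rcases le_or_gt t 0 with ht | ht
  · rw [max_eq_right (mul_nonpos_of_nonneg_of_nonpos h ht), max_eq_right ht, mul_zero]
  · rw [max_eq_left (mul_nonneg h ht.le), max_eq_left ht.le]
lemma relu_neg (t : ℝ) : relu (-t) = relu t - t := by
  unfold relu
  rcases le_or_gt t 0 with ht | ht
  · rw [max_eq_left (neg_nonneg.2 ht), max_eq_right ht]; ring
  · rw [max_eq_right (neg_nonpos.2 ht.le), max_eq_left ht.le]; ring

lemma sminus_aff_nonpos {d : ℕ} {v : E (d+1)} (hv : v ∈ Sminus d) {x : E d} (hx : ‖x‖ ≤ 1) :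
    aff x v ≤ 0 := by
  obtain ⟨hv1, hv2⟩ := hv
  set y : E d := WithLp.toLp 2 (fun i : Fin d => v i.castSucc) with hy
  have hinner : (∑ i : Fin d, x i * v i.castSucc) = (inner ℝ x y : ℝ) := by
    rw [PiLp.inner_apply]
    exact Finset.sum_congr rfl fun i _ => by simp [hy, RCLike.inner_apply, mul_comm]
  have hyn : ‖y‖ ^ 2 = 1 - v (Fin.last d) ^ 2 := by
    have hv2' : ‖v‖ ^ 2 = 1 := by rw [hv1]; norm_num
    rw [EuclideanSpace.norm_eq] at hv2' ⊢
    rw [Real.sq_sqrt (by positivity)] at hv2' ⊢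
    rw [Fin.sum_univ_castSucc] at hv2'
    simp only [Real.norm_eq_abs, sq_abs] at hv2' ⊢
    simp [hy]
    linarith
  have hvl : Real.sqrt 2 / 2 ≤ -(v (Fin.last d)) := by linarith
  have h2 : (Real.sqrt 2 / 2) ^ 2 = 1/2 := by
    rw [div_pow, Real.sq_sqrt (by norm_num)]; norm_num
  have hsq : 1 - v (Fin.last d) ^ 2 ≤ v (Fin.last d) ^ 2 := by
    have : (Real.sqrt 2 / 2) ^ 2 ≤ (-(v (Fin.last d))) ^ 2 := by
      apply pow_le_pow_left₀ (by positivity) hvl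
    rw [h2, neg_pow] at this
    simp at this
    linarith
  have hyle : ‖y‖ ≤ -(v (Fin.last d)) := by
    have h1 : ‖y‖ = Real.sqrt (1 - v (Fin.last d) ^ 2) := by
      rw [← hyn, Real.sqrt_sq (norm_nonneg _)]
    rw [h1]
    calc Real.sqrt (1 - v (Fin.last d) ^ 2) ≤ Real.sqrt (v (Fin.last d) ^ 2) :=
          Real.sqrt_le_sqrt hsq
      _ = |v (Fin.last d)| := Real.sqrt_sq_eq_abs _
      _ = -(v (Fin.last d)) := abs_of_nonpos (by nlinarith [Real.sqrt_nonneg 2])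
  have hcs : (inner ℝ x y : ℝ) ≤ ‖x‖ * ‖y‖ := real_inner_le_norm x y
  have : ‖x‖ * ‖y‖ ≤ ‖y‖ := by
    nlinarith [norm_nonneg y]
  unfold aff
  rw [hinner]
  linarith


lemma splus_relu {d : ℕ} {v : E (d+1)} (hv : v ∈ Splus d) {x : E d} (hx : ‖x‖ ≤ 1) :
    relu (aff x v) = aff x v := by
  apply relu_of_nonneg
  have := sminus_aff_nonpos hv hx
  rw [aff_neg] at this
  linarith

lemma sum_update_mul {K : ℕ} (c g : Fin K → ℝ) (k : Fin K) (β : ℝ) :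
    ∑ j, Function.update c k (c k + β) j * g j = (∑ j, c j * g j) + β * g k := by
  rw [Finset.sum_eq_sum_sdiff_singleton_add (Finset.mem_univ k)
    (fun j => Function.update c k (c k + β) j * g j),
    Finset.sum_eq_sum_sdiff_singleton_add (Finset.mem_univ k) (fun j => c j * g j)]
  have h : ∑ j ∈ Finset.univ \ {k}, Function.update c k (c k + β) j * g j
      = ∑ j ∈ Finset.univ \ {k}, c j * g j :=
    Finset.sum_congr rfl fun j hj => by
      have hjk : j ≠ k := by simpa using (Finset.mem_sdiff.1 hj).2
      rw [Function.update_of_ne hjk]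
  rw [h, Function.update_self]
  ring

lemma core (d N : ℕ) (b : Fin N → ℝ) (u : Fin N → E (d + 1)) :
    ∃ (K : ℕ) (c : Fin K → ℝ) (v : Fin K → E (d + 1)) (w : E (d + 1)),
      K ≤ N ∧ (∀ k, v k ∈ Szero d) ∧
      (∀ i k, i ≠ k → v i ≠ v k ∧ v i ≠ -v k) ∧
      ∀ x : E d, ‖x‖ ≤ 1 →
        (∑ i, b i * relu (aff x (u i))) = (∑ k, c k * relu (aff x (v k))) + aff x w := by
  induction N with
  | zero =>
      exact ⟨0, Fin.elim0, Fin.elim0, 0, le_refl 0, fun k => k.elim0, fun i => i.elim0,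
        fun x hx => by simp [aff_zero]⟩
  | succ N ih =>
      obtain ⟨K, c, v, w, hK, hS, hD, hsum⟩ := ih (b ∘ Fin.castSucc) (u ∘ Fin.castSucc)
      set β0 := b (Fin.last N) with hβ0
      set u0 := u (Fin.last N) with hu0
      have hsplit : ∀ x : E d, (∑ i : Fin (N+1), b i * relu (aff x (u i))) =
          (∑ i : Fin N, (b ∘ Fin.castSucc) i * relu (aff x ((u ∘ Fin.castSucc) i)))
            + β0 * relu (aff x u0) := by
        intro x
        rw [Fin.sum_univ_castSucc (f := fun i => b i * relu (aff x (u i)))]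
        rfl
      by_cases h0 : u0 = 0
      · refine ⟨K, c, v, w, hK.trans (Nat.le_succ N), hS, hD, fun x hx => ?_⟩
        rw [hsplit x, hsum x hx, h0, aff_zero]
        simp [relu]
      · set t := ‖u0‖ with htdef
        have ht : 0 < t := norm_pos_iff.mpr h0
        set uh : E (d+1) := t⁻¹ • u0 with huhdef
        have huh1 : ‖uh‖ = 1 := by
          rw [huhdef, norm_smul, norm_inv, norm_norm, ← htdef]
          field_simp
        have hterm : ∀ x : E d, β0 * relu (aff x u0) = (β0 * t) * relu (aff x uh) := by
          intro x
          have hx0 : aff x u0 = t * aff x uh := by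
            rw [huhdef, aff_smul]
            field_simp
          rw [hx0, relu_mul_nonneg ht.le]
          ring
        by_cases hmin : uh ∈ Sminus d
        · refine ⟨K, c, v, w, hK.trans (Nat.le_succ N), hS, hD, fun x hx => ?_⟩
          rw [hsplit x, hsum x hx, hterm x, relu_of_nonpos (sminus_aff_nonpos hmin hx)]
          ring
        · by_cases hplus : uh ∈ Splus d
          · refine ⟨K, c, v, w + (β0 * t) • uh, hK.trans (Nat.le_succ N), hS, hD,
              fun x hx => ?_⟩
            rw [hsplit x, hsum x hx, hterm x, splus_relu hplus hx, aff_add,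
              aff_smul x (β0 * t) uh]
            ring
          · have hz : uh ∈ Szero d := ⟨huh1, by simp [Sminus, Splus] at hmin hplus ⊢; tauto⟩
            by_cases ha : ∃ k, v k = uh
            · obtain ⟨k, hk⟩ := ha
              refine ⟨K, Function.update c k (c k + β0 * t), v, w,
                hK.trans (Nat.le_succ N), hS, hD, fun x hx => ?_⟩
              rw [hsplit x, hsum x hx, hterm x,
                sum_update_mul c (fun j => relu (aff x (v j))) k (β0 * t), hk]
              ring
            · by_cases hb : ∃ k, v k = -uh
              · obtain ⟨k, hk⟩ := hb
                refine ⟨K, Function.update c k (c k + β0 * t), v, w + (-(β0 * t)) • v k,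
                  hK.trans (Nat.le_succ N), hS, hD, fun x hx => ?_⟩
                have huh : uh = -(v k) := by rw [hk]; simp
                rw [hsplit x, hsum x hx, hterm x,
                  sum_update_mul c (fun j => relu (aff x (v j))) k (β0 * t),
                  huh, aff_neg, relu_neg, aff_add, aff_smul]
                ring
              · push_neg at ha hb
                refine ⟨K + 1, Fin.snoc c (β0 * t), Fin.snoc v uh, w,
                  Nat.succ_le_succ hK, ?_, ?_, fun x hx => ?_⟩
                · intro k
                  refine Fin.lastCases ?_ (fun j => ?_) k
                  · rw [Fin.snoc_last]; exact hz
                  · rw [Fin.snoc_castSucc]; exact hS j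
                · intro i k hik
                  rcases Fin.eq_castSucc_or_eq_last i with ⟨j, rfl⟩ | rfl <;>
                    rcases Fin.eq_castSucc_or_eq_last k with ⟨j', rfl⟩ | rfl
                  · rw [Fin.snoc_castSucc, Fin.snoc_castSucc]
                    exact hD j j' (fun h => hik (congrArg Fin.castSucc h))
                  · rw [Fin.snoc_castSucc, Fin.snoc_last]
                    exact ⟨ha j, hb j⟩
                  · rw [Fin.snoc_last, Fin.snoc_castSucc]
                    exact ⟨fun h => ha j' h.symm, fun h => hb j' (by rw [h, neg_neg])⟩
                  · exact absurd rfl hik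
                · rw [hsplit x, hsum x hx, hterm x]
                  conv_rhs => rw [Fin.sum_univ_castSucc]
                  simp only [Fin.snoc_castSucc, Fin.snoc_last]
                  ring

/-- every f ∈ NN(N) has a reduced representation
    f(x) = Σ_{k=1}^K c_k σ((xᵀ,1)v_k) + (xᵀ,1)w with K ≤ N, v_k ∈ S_0 pairwise non-(anti)parallel. -/
theorem statement1 (d N : ℕ) (hd : 1 ≤ d) (hN : 1 ≤ N) (f : E d → ℝ)
    (hf : f ∈ NNclass d N) :
    ∃ (K : ℕ) (c : Fin K → ℝ) (v : Fin K → E (d + 1)) (w : E (d + 1)),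
      K ≤ N ∧ (∀ k, v k ∈ Szero d) ∧
      (∀ i k, i ≠ k → v i ≠ v k ∧ v i ≠ -v k) ∧
      ∀ x : E d, ‖x‖ ≤ 1 → f x = (∑ k, c k * relu (aff x (v k))) + aff x w := by
  obtain ⟨θ, hθ⟩ := hf
  obtain ⟨K, c, v, w, hK, hS, hD, hsum⟩ := core d N θ.1 θ.2
  exact ⟨K, c, v, w, hK, hS, hD, fun x hx => (hθ x hx).trans (hsum x hx)⟩
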